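/- Let A be a real symmetric d×d matrix, λ > 0, and m ≤ d, and assume that the eigenvalues of A − λI_d are pairwise distinct and nonzero. Consider the function U(W) = ‖WWᵀ − A‖_F² + 2λ tr(WWᵀ) on ℝ^{d×m}. Then U attains its global minimum, the minimum value equals ‖(A − λI_d)⁺₍ₘ₎ − (A − λI_d)‖_F² + ‖A‖_F² − ‖A − λI_d‖_F², and a matrix W ∈ ℝ^{d×m} is a global minimizer of U if and only if WWᵀ = (A − λI_d)⁺₍ₘ₎. -/

import Mathlib

open Matrix

/-- Frobenius norm of a real matrix. -/
noncomputable def frobNorm {n m : ℕ} (M : Matrix (Fin n) (Fin m) ℝ) : ℝ :=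
  Real.sqrt (∑ i, ∑ j, (M i j) ^ 2)


private noncomputable def F2 {a b : ℕ} (M : Matrix (Fin a) (Fin b) ℝ) : ℝ :=
  ∑ i, ∑ j, (M i j) ^ 2

private lemma F2_nonneg {a b : ℕ} (M : Matrix (Fin a) (Fin b) ℝ) : 0 ≤ F2 M :=
  Finset.sum_nonneg fun _ _ => Finset.sum_nonneg fun _ _ => sq_nonneg _

private lemma F2_eq_trace {a b : ℕ} (M : Matrix (Fin a) (Fin b) ℝ) :
    F2 M = (M * Mᵀ).trace := by
  simp [F2, Matrix.trace, Matrix.mul_apply, Matrix.diag, sq]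

private lemma F2_eq_zero {a b : ℕ} {M : Matrix (Fin a) (Fin b) ℝ} (h : F2 M = 0) : M = 0 := by
  ext i j
  have h1 : ∀ i ∈ Finset.univ (α := Fin a), (0:ℝ) ≤ ∑ j, (M i j)^2 :=
    fun _ _ => Finset.sum_nonneg fun _ _ => sq_nonneg _
  have h2 := (Finset.sum_eq_zero_iff_of_nonneg h1).mp h i (Finset.mem_univ i)
  have h3 := (Finset.sum_eq_zero_iff_of_nonneg (fun _ _ => sq_nonneg (M i _))).mp h2 j
    (Finset.mem_univ j)
  simpa using pow_eq_zero_iff (n := 2) (by norm_num) |>.mp h3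

private lemma F2_neg {a b : ℕ} (M : Matrix (Fin a) (Fin b) ℝ) : F2 (-M) = F2 M := by
  simp [F2]

private lemma count_ge (d m : ℕ) (hm : m ≤ d) :
    ∑ i : Fin d, (if m ≤ (i : ℕ) then (1:ℝ) else 0) = ((d - m : ℕ) : ℝ) := by
  rw [Fin.sum_univ_eq_sum_range (fun i => if m ≤ i then (1:ℝ) else 0) d]
  rw [Finset.sum_boole]
  have h5 : (Finset.range d).filter (fun i => m ≤ i) = Finset.range d \ Finset.range m := by
    ext x; simp only [Finset.mem_filter, Finset.mem_range, Finset.mem_sdiff]; omega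
  rw [h5, Finset.card_sdiff_of_subset (Finset.range_subset_range.mpr hm)]
  simp


lemma exists_proj (d m : ℕ) (hm : m ≤ d) (W : Matrix (Fin d) (Fin m) ℝ) :
    ∃ P : Matrix (Fin d) (Fin d) ℝ, Pᵀ = P ∧ P * P = P ∧ Wᵀ * P = 0 ∧
      P.trace = ((d - m : ℕ) : ℝ) := by
  classical
  have hdim : d - m ≤ Module.finrank ℝ (LinearMap.ker (Matrix.toEuclideanLin Wᵀ)) := by
    have h1 := LinearMap.finrank_range_add_finrank_ker (Matrix.toEuclideanLin Wᵀ)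
    have h2 : Module.finrank ℝ (LinearMap.range (Matrix.toEuclideanLin Wᵀ)) ≤
        Module.finrank ℝ (EuclideanSpace ℝ (Fin m)) :=
      Submodule.finrank_le _
    have h3 : Module.finrank ℝ (EuclideanSpace ℝ (Fin d)) = d := by simp
    have h4 : Module.finrank ℝ (EuclideanSpace ℝ (Fin m)) = m := by simp
    omega
  obtain ⟨v, hon, hkv⟩ : ∃ v : Fin (d - m) → EuclideanSpace ℝ (Fin d),
      Orthonormal ℝ v ∧ ∀ k, v k ∈ LinearMap.ker (Matrix.toEuclideanLin Wᵀ) := by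
    refine ⟨fun k => (stdOrthonormalBasis ℝ (LinearMap.ker (Matrix.toEuclideanLin Wᵀ))
      (Fin.castLE hdim k) : EuclideanSpace ℝ (Fin d)), ?_, fun k => ?_⟩
    · have h1 := ((stdOrthonormalBasis ℝ
        (LinearMap.ker (Matrix.toEuclideanLin Wᵀ))).orthonormal).comp
        (Fin.castLE hdim) (Fin.castLE_injective _)
      rw [orthonormal_iff_ite] at h1 ⊢
      intro i j
      rw [← Submodule.coe_inner]
      exact h1 i j
    · exact (stdOrthonormalBasis ℝ _ (Fin.castLE hdim k)).2
  have hker : ∀ k, Wᵀ *ᵥ (v k) = 0 := by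
    intro k
    have h0 : Matrix.toEuclideanLin Wᵀ (v k) = 0 := hkv k
    exact congrArg (WithLp.equiv 2 (Fin m → ℝ)) h0
  set V : Matrix (Fin d) (Fin (d - m)) ℝ := Matrix.of fun i k => v k i with hV
  have hVtV : Vᵀ * V = 1 := by
    ext k l
    have h1 := (orthonormal_iff_ite.mp hon) k l
    simp only [PiLp.inner_apply, RCLike.inner_apply, starRingEnd_apply, star_trivial] at h1
    simp only [mul_apply, transpose_apply, hV, of_apply, one_apply]
    rw [← h1]
    exact Finset.sum_congr rfl fun _ _ => mul_comm _ _
  have hWV : Wᵀ * V = 0 := by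
    ext a k
    have h2 := congrFun (hker k) a
    simpa [mul_apply, hV, Matrix.mulVec, dotProduct] using h2
  refine ⟨V * Vᵀ, by simp [transpose_mul], ?_, ?_, ?_⟩
  · rw [Matrix.mul_assoc, ← Matrix.mul_assoc Vᵀ, hVtV, Matrix.one_mul]
  · rw [← Matrix.mul_assoc, hWV, Matrix.zero_mul]
  · rw [Matrix.trace_mul_comm, hVtV, Matrix.trace_one]
    simp

private lemma frob_sq {a b : ℕ} (M : Matrix (Fin a) (Fin b) ℝ) : frobNorm M ^ 2 = F2 M :=
  Real.sq_sqrt (Finset.sum_nonneg fun _ _ => Finset.sum_nonneg fun _ _ => sq_nonneg _)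

private lemma F2_conj {d : ℕ} (U X : Matrix (Fin d) (Fin d) ℝ)
    (hUU : U * Uᵀ = 1) : F2 (Uᵀ * X * U) = F2 X := by
  rw [F2_eq_trace, F2_eq_trace]
  have h1 : (Uᵀ * X * U) * (Uᵀ * X * U)ᵀ = Uᵀ * (X * Xᵀ) * U := by
    simp only [Matrix.transpose_mul, Matrix.transpose_transpose, Matrix.mul_assoc]
    rw [← Matrix.mul_assoc U Uᵀ (Xᵀ * U), hUU, Matrix.one_mul]
  rw [h1, Matrix.trace_mul_comm (Uᵀ * (X * Xᵀ)) U, ← Matrix.mul_assoc, hUU, Matrix.one_mul]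

private lemma F2_sub_smul_one {d : ℕ} (X : Matrix (Fin d) (Fin d) ℝ) (t : ℝ) :
    F2 (X - t • (1 : Matrix (Fin d) (Fin d) ℝ)) = F2 X - 2*t*X.trace + t^2 * d := by
  have per : ∀ i j : Fin d, ((X - t • (1 : Matrix (Fin d) (Fin d) ℝ)) i j)^2
      = (X i j)^2 - (if i = j then 2*t*X i i - t^2 else 0) := by
    intro i j
    by_cases h : i = j
    · subst h
      rw [if_pos rfl, Matrix.sub_apply, Matrix.smul_apply, Matrix.one_apply_eq, smul_eq_mul]
      ring
    · rw [if_neg h, Matrix.sub_apply, Matrix.smul_apply, Matrix.one_apply_ne h, smul_eq_mul]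
      ring
  calc F2 (X - t • (1 : Matrix (Fin d) (Fin d) ℝ))
      = ∑ i : Fin d, ∑ j : Fin d, ((X i j)^2 - (if i = j then 2*t*X i i - t^2 else 0)) := by
        rw [F2]
        exact Finset.sum_congr rfl fun i _ => Finset.sum_congr rfl fun j _ => per i j
    _ = ∑ i : Fin d, (∑ j : Fin d, (X i j)^2 - (2*t*X i i - t^2)) := by
        refine Finset.sum_congr rfl fun i _ => ?_
        rw [Finset.sum_sub_distrib]
        congr 1
        simp
    _ = F2 X - (2*t*(∑ i : Fin d, X i i) - t^2 * d) := by
        rw [Finset.sum_sub_distrib, F2, Finset.sum_sub_distrib, ← Finset.mul_sum,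
          Finset.sum_const, Finset.card_univ, Fintype.card_fin, nsmul_eq_mul]
        ring
    _ = _ := by
        have : ∑ i : Fin d, X i i = X.trace := rfl
        rw [this]; ring

private lemma exists_W0 (d m : ℕ) (nu : Fin d → ℝ) (hnn : ∀ i, 0 ≤ nu i)
    (hz : ∀ i : Fin d, ¬ (i:ℕ) < m → nu i = 0) :
    ∃ W0 : Matrix (Fin d) (Fin m) ℝ, W0 * W0ᵀ = Matrix.diagonal nu := by
  classical
  refine ⟨Matrix.of fun i k => if (i:ℕ) = (k:ℕ) then Real.sqrt (nu i) else 0, ?_⟩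
  ext i j
  rw [Matrix.mul_apply]
  by_cases h : i = j
  · subst h
    rw [Matrix.diagonal_apply_eq]
    by_cases him : (i:ℕ) < m
    · rw [Finset.sum_eq_single (⟨(i:ℕ), him⟩ : Fin m)]
      · simp only [Matrix.transpose_apply, Matrix.of_apply, if_pos rfl]
        exact Real.mul_self_sqrt (hnn i)
      · intro k _ hk
        have h2 : (i:ℕ) ≠ (k:ℕ) := fun e => hk (by apply Fin.ext; exact e.symm)
        simp [h2]
      · intro h3; exact absurd (Finset.mem_univ _) h3
    · rw [hz i him]
      refine Finset.sum_eq_zero fun k _ => ?_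
      simp [hz i him]
  · rw [Matrix.diagonal_apply_ne _ h]
    refine Finset.sum_eq_zero fun k _ => ?_
    by_cases h1 : (i:ℕ) = (k:ℕ)
    · have h2 : ¬ (j:ℕ) = (k:ℕ) := fun e => h (Fin.ext (h1.trans e.symm))
      simp [h1, h2]
    · simp [h1]

section KeyLemma

variable {d m : ℕ} (hm : m ≤ d) (mu : Fin d → ℝ)

private lemma key_diag (hm : m ≤ d) (mu : Fin d → ℝ)
    (hmu : Antitone mu) (hmu' : Function.Injective mu) (hmu0 : ∀ i, mu i ≠ 0)
    (P : Matrix (Fin d) (Fin d) ℝ)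
    (W : Matrix (Fin d) (Fin m) ℝ)
    (hPt : Pᵀ = P) (hPP : P * P = P) (hWP : Wᵀ * P = 0)
    (htr : P.trace = ((d - m : ℕ) : ℝ)) :
    F2 (Matrix.diagonal (fun i : Fin d => if (i:ℕ) < m then max (mu i) 0 else 0)
        - Matrix.diagonal mu) ≤ F2 (W * Wᵀ - Matrix.diagonal mu) ∧
    (F2 (W * Wᵀ - Matrix.diagonal mu) =
      F2 (Matrix.diagonal (fun i : Fin d => if (i:ℕ) < m then max (mu i) 0 else 0)
        - Matrix.diagonal mu) →
      W * Wᵀ = Matrix.diagonal (fun i : Fin d => if (i:ℕ) < m then max (mu i) 0 else 0)) := by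
  classical
  set nu : Fin d → ℝ := fun i => if (i:ℕ) < m then max (mu i) 0 else 0 with hnu
  set S : Matrix (Fin d) (Fin d) ℝ := W * Wᵀ with hS
  set D : Matrix (Fin d) (Fin d) ℝ := Matrix.diagonal mu with hD
  set Dp : Matrix (Fin d) (Fin d) ℝ := Matrix.diagonal (fun i => max (mu i) 0) with hDp
  set M : Matrix (Fin d) (Fin d) ℝ := S - Dp with hM
  set g : Fin d → ℝ := fun i => (max (mu i) 0)^2 with hg
  set c : ℝ := if h : m < d then (max (mu ⟨m, h⟩) 0)^2 else 0 with hc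
  set sl : Fin d → ℝ :=
    fun i => if (i:ℕ) < m then (g i - c) * P i i else (c - g i) * (1 - P i i) with hsl
  -- basic facts about P
  have hPsym : ∀ i j, P j i = P i j := fun i j => congrFun (congrFun hPt i) j
  have hPdsq : ∀ i, P i i = ∑ j, (P i j)^2 := by
    intro i
    conv_lhs => rw [← hPP]
    rw [Matrix.mul_apply]
    exact Finset.sum_congr rfl fun j _ => by rw [hPsym i j, sq]
  have hP0 : ∀ i, 0 ≤ P i i := fun i => (hPdsq i) ▸ Finset.sum_nonneg fun _ _ => sq_nonneg _
  have hP1 : ∀ i, P i i ≤ 1 := by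
    intro i
    have h1 : (P i i)^2 ≤ P i i := by
      conv_rhs => rw [hPdsq i]
      exact Finset.single_le_sum (fun j _ => sq_nonneg (P i j)) (Finset.mem_univ i)
    nlinarith [hP0 i]
  have hSd : ∀ i j, S i j = ∑ k, W i k * W j k := by
    intro i j; rw [hS, Matrix.mul_apply]; rfl
  have hS0 : ∀ i, 0 ≤ S i i := by
    intro i; rw [hSd i i]; exact Finset.sum_nonneg fun k _ => mul_self_nonneg _
  have hSP : S * P = 0 := by rw [hS, Matrix.mul_assoc, hWP, Matrix.mul_zero]
  -- facts about mu and g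
  have hsa : ∀ i j : Fin d, i < j → mu j < mu i := by
    intro i j h
    exact lt_of_le_of_ne (hmu h.le) fun e => (ne_of_lt h) ((hmu' e).symm)
  have hgm : ∀ i j : Fin d, i ≤ j → g j ≤ g i := by
    intro i j h
    exact pow_le_pow_left₀ (le_max_right _ 0) (max_le_max (hmu h) le_rfl) 2
  have hglt : ∀ i j : Fin d, i < j → 0 < mu i → g j < g i := by
    intro i j h hpos
    have h2 : max (mu j) 0 < max (mu i) 0 := by
      rw [max_eq_left hpos.le]
      exact max_lt (hsa i j h) hpos
    exact pow_lt_pow_left₀ h2 (le_max_right _ 0) two_ne_zero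
  have hcg : ∀ i : Fin d, (i:ℕ) < m → c ≤ g i := by
    intro i hi
    by_cases h : m < d
    · rw [hc, dif_pos h]
      exact hgm i ⟨m, h⟩ (by rw [Fin.le_def]; exact le_of_lt hi)
    · rw [hc, dif_neg h]; positivity
  have hgc : ∀ i : Fin d, m ≤ (i:ℕ) → g i ≤ c := by
    intro i hi
    have hmd : m < d := lt_of_le_of_lt hi i.isLt
    rw [hc, dif_pos hmd]
    exact hgm ⟨m, hmd⟩ i (by rw [Fin.le_def]; exact hi)
  have hslnn : ∀ i, 0 ≤ sl i := by
    intro i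
    simp only [hsl]
    by_cases h : (i:ℕ) < m
    · rw [if_pos h]
      exact mul_nonneg (sub_nonneg.mpr (hcg i h)) (hP0 i)
    · rw [if_neg h]
      exact mul_nonneg (sub_nonneg.mpr (hgc i (not_lt.mp h))) (sub_nonneg.mpr (hP1 i))
  -- Identity 1
  have Id1 : F2 (S - D) = F2 M + (∑ i, (min (mu i) 0)^2)
      + 2 * ∑ i, (-(min (mu i) 0)) * S i i := by
    have per : ∀ i j : Fin d, ((S - D) i j)^2 = (M i j)^2
        + (if i = j then (min (mu i) 0)^2 + 2 * ((-(min (mu i) 0)) * S i i) else 0) := by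
      intro i j
      by_cases h : i = j
      · subst h
        rw [if_pos rfl, hM, hD, hDp, Matrix.sub_apply, Matrix.sub_apply,
          Matrix.diagonal_apply_eq, Matrix.diagonal_apply_eq]
        rcases le_total (mu i) 0 with h1 | h1
        · rw [max_eq_right h1, min_eq_left h1]; ring
        · rw [max_eq_left h1, min_eq_right h1]; ring
      · rw [if_neg h, hM, hD, hDp, Matrix.sub_apply, Matrix.sub_apply,
          Matrix.diagonal_apply_ne _ h, Matrix.diagonal_apply_ne _ h]
        ring
    calc F2 (S - D) = ∑ i, ∑ j, ((M i j)^2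
        + (if i = j then (min (mu i) 0)^2 + 2 * ((-(min (mu i) 0)) * S i i) else 0)) := by
          rw [F2]
          exact Finset.sum_congr rfl fun i _ => Finset.sum_congr rfl fun j _ => per i j
      _ = ∑ i : Fin d, (∑ j : Fin d, (M i j)^2
            + ((min (mu i) 0)^2 + 2 * ((-(min (mu i) 0)) * S i i))) := by
          refine Finset.sum_congr rfl fun i _ => ?_
          rw [Finset.sum_add_distrib]
          congr 1
          simp
      _ = F2 M + ∑ i : Fin d, ((min (mu i) 0)^2 + 2 * ((-(min (mu i) 0)) * S i i)) := by
          rw [F2, Finset.sum_add_distrib]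
      _ = _ := by rw [Finset.sum_add_distrib, ← Finset.mul_sum]; ring
  -- Identity 2
  have Id2 : F2 (Matrix.diagonal nu - D) = (∑ i, (min (mu i) 0)^2)
      + ∑ i : Fin d, (if m ≤ (i:ℕ) then g i else 0) := by
    have per : ∀ i j : Fin d, ((Matrix.diagonal nu - D) i j)^2 =
        (if i = j then (min (mu i) 0)^2 + (if m ≤ (i:ℕ) then g i else 0) else 0) := by
      intro i j
      by_cases h : i = j
      · subst h
        rw [if_pos rfl, hD, Matrix.sub_apply, Matrix.diagonal_apply_eq,
          Matrix.diagonal_apply_eq]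
        simp only [hnu, hg]
        by_cases h2 : (i:ℕ) < m
        · rw [if_pos h2, if_neg (by omega)]
          rcases le_total (mu i) 0 with h1 | h1
          · rw [max_eq_right h1, min_eq_left h1]; ring
          · rw [max_eq_left h1, min_eq_right h1]; ring
        · rw [if_neg h2, if_pos (by omega)]
          rcases le_total (mu i) 0 with h1 | h1
          · rw [max_eq_right h1, min_eq_left h1]; ring
          · rw [max_eq_left h1, min_eq_right h1]; ring
      · rw [if_neg h, hD, Matrix.sub_apply, Matrix.diagonal_apply_ne _ h,
          Matrix.diagonal_apply_ne _ h]
        ring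
    calc F2 (Matrix.diagonal nu - D)
        = ∑ i, ∑ j, (if i = j then (min (mu i) 0)^2 + (if m ≤ (i:ℕ) then g i else 0) else 0) := by
          rw [F2]
          exact Finset.sum_congr rfl fun i _ => Finset.sum_congr rfl fun j _ => per i j
      _ = ∑ i, ((min (mu i) 0)^2 + (if m ≤ (i:ℕ) then g i else 0)) := by
          exact Finset.sum_congr rfl fun i _ => by simp
      _ = _ := Finset.sum_add_distrib
  -- Identity 3
  have hMP : M * P = -(Dp * P) := by
    rw [hM, Matrix.sub_mul, hSP, zero_sub]
  have Id3 : F2 M = F2 (M * (1 - P)) + ∑ i, g i * P i i := by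
    have e1 : (1 - P) * (1 - P)ᵀ = 1 - P := by
      rw [Matrix.transpose_sub, Matrix.transpose_one, hPt, Matrix.sub_mul, Matrix.one_mul,
        Matrix.mul_sub, Matrix.mul_one, hPP]
      abel
    have e2 : P * Pᵀ = P := by rw [hPt, hPP]
    have e3 : (M * (1 - P)) * (M * (1 - P))ᵀ = M * (1 - P) * Mᵀ := by
      rw [Matrix.transpose_mul, ← Matrix.mul_assoc, Matrix.mul_assoc (M * (1 - P)),
        Matrix.mul_assoc M, ← Matrix.mul_assoc (1-P), e1, ← Matrix.mul_assoc]
    have e4 : (M * P) * (M * P)ᵀ = M * P * Mᵀ := by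
      rw [Matrix.transpose_mul, ← Matrix.mul_assoc, Matrix.mul_assoc (M * P),
        Matrix.mul_assoc M, ← Matrix.mul_assoc P, e2, ← Matrix.mul_assoc]
    have hsplit : M * Mᵀ = (M * (1 - P)) * (M * (1 - P))ᵀ + (M * P) * (M * P)ᵀ := by
      rw [e3, e4, ← Matrix.add_mul, ← Matrix.mul_add, sub_add_cancel, Matrix.mul_one]
    have e5 : F2 (M * P) = ∑ i, g i * P i i := by
      rw [hMP, F2_neg, F2]
      refine Finset.sum_congr rfl fun i _ => ?_
      calc ∑ j, ((Dp * P) i j)^2 = ∑ j, (max (mu i) 0)^2 * (P i j)^2 := by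
            refine Finset.sum_congr rfl fun j _ => ?_
            rw [hDp, Matrix.diagonal_mul, mul_pow]
        _ = g i * P i i := by rw [← Finset.mul_sum, ← hPdsq i, hg]
    rw [F2_eq_trace M, hsplit, Matrix.trace_add, ← F2_eq_trace, ← F2_eq_trace, e5]
  -- Identity 4
  have Id4 : ∑ i, g i * P i i = (∑ i : Fin d, if m ≤ (i:ℕ) then g i else 0) + ∑ i, sl i := by
    have per : ∀ i : Fin d, g i * P i i = (if m ≤ (i:ℕ) then g i else 0) + sl i
        + c * P i i - c * (if m ≤ (i:ℕ) then (1:ℝ) else 0) := by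
      intro i
      simp only [hsl]
      by_cases h : (i:ℕ) < m
      · rw [if_pos h, if_neg (by omega), if_neg (by omega)]; ring
      · rw [if_neg h, if_pos (by omega), if_pos (by omega)]; ring
    have htr' : ∑ i, P i i = ((d - m : ℕ) : ℝ) := by
      rw [← htr]; rfl
    calc ∑ i, g i * P i i = ∑ i : Fin d, ((if m ≤ (i:ℕ) then g i else 0) + sl i
        + c * P i i - c * (if m ≤ (i:ℕ) then (1:ℝ) else 0)) :=
          Finset.sum_congr rfl fun i _ => per i
      _ = _ := by
          rw [Finset.sum_sub_distrib, Finset.sum_add_distrib, Finset.sum_add_distrib,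
            ← Finset.mul_sum, ← Finset.mul_sum, htr', count_ge d m hm]
          ring
  -- main identity
  have main : F2 (S - D) = F2 (Matrix.diagonal nu - D)
      + (F2 (M * (1 - P)) + (∑ i, sl i) + 2 * ∑ i, (-(min (mu i) 0)) * S i i) := by
    rw [Id1, Id2, Id3, Id4]; ring
  have n1 : 0 ≤ F2 (M * (1 - P)) := F2_nonneg _
  have n2 : 0 ≤ ∑ i, sl i := Finset.sum_nonneg fun i _ => hslnn i
  have n3 : 0 ≤ ∑ i, (-(min (mu i) 0)) * S i i :=
    Finset.sum_nonneg fun i _ => mul_nonneg (by simp [min_le_iff]) (hS0 i)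
  constructor
  · linarith
  · intro heq
    have z1 : F2 (M * (1 - P)) = 0 := by linarith
    have z2 : ∑ i, sl i = 0 := by linarith
    have z3 : ∑ i, (-(min (mu i) 0)) * S i i = 0 := by linarith
    have hMP2 : M = M * P := by
      have h0 := F2_eq_zero z1
      rw [Matrix.mul_sub, Matrix.mul_one, sub_eq_zero] at h0
      exact h0
    have hslz : ∀ i, sl i = 0 := fun i =>
      (Finset.sum_eq_zero_iff_of_nonneg fun i _ => hslnn i).mp z2 i (Finset.mem_univ i)
    have hnegz : ∀ i, (-(min (mu i) 0)) * S i i = 0 := fun i =>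
      (Finset.sum_eq_zero_iff_of_nonneg fun i _ =>
        mul_nonneg (by simp [min_le_iff]) (hS0 i)).mp z3 i (Finset.mem_univ i)
    -- column lemmas
    have colP0 : ∀ j : Fin d, P j j = 0 → ∀ i, P i j = 0 := by
      intro j hj i
      have h1 : ∑ k, (P j k)^2 = 0 := by rw [← hPdsq j, hj]
      have h2 : (P j i)^2 = 0 :=
        (Finset.sum_eq_zero_iff_of_nonneg fun k _ => sq_nonneg _).mp h1 i (Finset.mem_univ i)
      rw [hPsym j i]
      exact pow_eq_zero_iff two_ne_zero |>.mp h2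
    have colP1 : ∀ j : Fin d, P j j = 1 → ∀ k, P k j = if k = j then 1 else 0 := by
      intro j hj k
      have h1 : ∑ i, (P j i)^2 = 1 := by rw [← hPdsq j, hj]
      have h3 : ∑ i ∈ Finset.univ.erase j, (P j i)^2 = 0 := by
        rw [← Finset.add_sum_erase _ _ (Finset.mem_univ j)] at h1
        have : (P j j)^2 = 1 := by rw [hj]; norm_num
        linarith
      by_cases hk : k = j
      · subst hk; rw [if_pos rfl, hj]
      · rw [if_neg hk, hPsym j k]
        have h4 : (P j k)^2 = 0 :=
          (Finset.sum_eq_zero_iff_of_nonneg fun i _ => sq_nonneg _).mp h3 k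
            (Finset.mem_erase.mpr ⟨hk, Finset.mem_univ k⟩)
        exact pow_eq_zero_iff two_ne_zero |>.mp h4
    have colS0 : ∀ j : Fin d, S j j = 0 → ∀ i, S i j = 0 := by
      intro j hj i
      have h2 : ∑ k, (W j k)^2 = 0 := by
        rw [← hj, hSd j j]
        exact Finset.sum_congr rfl fun k _ => (sq (W j k)) ▸ rfl
      have h1 : ∀ k, W j k = 0 := by
        intro k
        have := (Finset.sum_eq_zero_iff_of_nonneg fun k _ => sq_nonneg _).mp h2 k
          (Finset.mem_univ k)
        exact pow_eq_zero_iff two_ne_zero |>.mp this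
      rw [hSd i j]
      exact Finset.sum_eq_zero fun k _ => by rw [h1 k, mul_zero]
    have keptP : ∀ j : Fin d, (j:ℕ) < m → 0 < mu j → P j j = 0 := by
      intro j hjm hpos
      have hlt : c < g j := by
        by_cases h : m < d
        · rw [hc, dif_pos h]
          exact hglt j ⟨m, h⟩ (by rw [Fin.lt_def]; exact hjm) hpos
        · rw [hc, dif_neg h, hg]
          have : (0:ℝ) < max (mu j) 0 := lt_max_iff.mpr (Or.inl hpos)
          positivity
      have h0 := hslz j
      simp only [hsl, if_pos hjm] at h0
      rcases mul_eq_zero.mp h0 with h1 | h1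
      · exact absurd h1 (sub_ne_zero.mpr (ne_of_gt hlt))
      · exact h1
    have keptS : ∀ j : Fin d, (j:ℕ) < m → 0 < mu j → ∀ i, S i j = Dp i j := by
      intro j hjm hpos i
      have h1 : ∀ k, P k j = 0 := colP0 j (keptP j hjm hpos)
      have h2 : M i j = 0 := by
        calc M i j = (M * P) i j := by rw [← hMP2]
          _ = ∑ k, M i k * P k j := Matrix.mul_apply
          _ = 0 := Finset.sum_eq_zero fun k _ => by rw [h1 k, mul_zero]
      have h3 : S i j - Dp i j = 0 := by
        rw [← Matrix.sub_apply, ← hM]; exact h2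
      linarith
    have geP1 : ∀ j : Fin d, m ≤ (j:ℕ) → 0 < mu j → P j j = 1 := by
      intro j hjm hpos
      have hmd : m < d := lt_of_le_of_lt hjm j.isLt
      by_cases hj : m < (j:ℕ)
      · have hlt : g j < c := by
          rw [hc, dif_pos hmd]
          exact hglt ⟨m, hmd⟩ j (by rw [Fin.lt_def]; exact hj)
            (lt_trans hpos (hsa ⟨m, hmd⟩ j (by rw [Fin.lt_def]; exact hj)))
        have h0 := hslz j
        simp only [hsl] at h0
        rw [if_neg (by omega)] at h0
        rcases mul_eq_zero.mp h0 with h1 | h1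
        · exact absurd h1 (sub_ne_zero.mpr (ne_of_gt hlt))
        · linarith
      · have hjeq : (j:ℕ) = m := by omega
        have hless : ∀ i : Fin d, (i:ℕ) < m → P i i = 0 := by
          intro i him
          refine keptP i him ?_
          have : mu j < mu i := hsa i j (by rw [Fin.lt_def]; omega)
          linarith
        have hsum1 : ∑ i : Fin d, (if m ≤ (i:ℕ) then P i i else 0) = ((d-m:ℕ):ℝ) := by
          have e : ∑ i : Fin d, (if m ≤ (i:ℕ) then P i i else 0) = ∑ i, P i i := by
            refine Finset.sum_congr rfl fun i _ => ?_
            by_cases h : m ≤ (i:ℕ)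
            · rw [if_pos h]
            · rw [if_neg h, hless i (by omega)]
          rw [e, ← htr]; rfl
        have hsum2 : ∑ i : Fin d, (if m ≤ (i:ℕ) then 1 - P i i else 0) = 0 := by
          have e : ∑ i : Fin d, (if m ≤ (i:ℕ) then 1 - P i i else 0)
              = (∑ i : Fin d, if m ≤ (i:ℕ) then (1:ℝ) else 0)
                - ∑ i : Fin d, (if m ≤ (i:ℕ) then P i i else 0) := by
            rw [← Finset.sum_sub_distrib]
            refine Finset.sum_congr rfl fun i _ => ?_
            by_cases h : m ≤ (i:ℕ) <;> simp [h]
          rw [e, count_ge d m hm, hsum1]; ring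
        have h5 : (1:ℝ) - P j j = 0 := by
          have hnn : ∀ i ∈ Finset.univ (α := Fin d),
              (0:ℝ) ≤ (if m ≤ (i:ℕ) then 1 - P i i else 0) := by
            intro i _
            by_cases h : m ≤ (i:ℕ)
            · rw [if_pos h]; linarith [hP1 i]
            · rw [if_neg h]
          have := (Finset.sum_eq_zero_iff_of_nonneg hnn).mp hsum2 j (Finset.mem_univ j)
          rwa [if_pos hjm] at this
        linarith
    -- conclude entrywise
    ext i j
    rcases (hmu0 j).lt_or_gt with hneg | hpos
    · have hSjj : S j j = 0 := by
        have h0 := hnegz j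
        have hne : -(min (mu j) 0) ≠ 0 := by
          rw [min_eq_left hneg.le]
          exact neg_ne_zero.mpr (ne_of_lt hneg)
        exact (mul_eq_zero.mp h0).resolve_left hne
      rw [colS0 j hSjj i]
      by_cases h : i = j
      · subst h
        rw [Matrix.diagonal_apply_eq]
        simp only [hnu]
        by_cases h2 : (i:ℕ) < m
        · rw [if_pos h2, max_eq_right hneg.le]
        · rw [if_neg h2]
      · rw [Matrix.diagonal_apply_ne _ h]
    · by_cases hjm : (j:ℕ) < m
      · rw [keptS j hjm hpos i]
        by_cases h : i = j
        · subst h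
          rw [hDp, Matrix.diagonal_apply_eq, Matrix.diagonal_apply_eq]
          simp only [hnu, if_pos hjm]
        · rw [hDp, Matrix.diagonal_apply_ne _ h, Matrix.diagonal_apply_ne _ h]
      · have hcol := colP1 j (geP1 j (not_lt.mp hjm) hpos)
        have h6 : S i j = 0 := by
          have h7 : (S * P) i j = S i j := by
            rw [Matrix.mul_apply]
            calc ∑ k, S i k * P k j = ∑ k, S i k * (if k = j then 1 else 0) :=
                  Finset.sum_congr rfl fun k _ => by rw [hcol k]
              _ = S i j := by simp
          rw [← h7, hSP]; rfl
        rw [h6]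
        by_cases h : i = j
        · subst h
          rw [Matrix.diagonal_apply_eq]
          simp only [hnu, if_neg hjm]
        · rw [Matrix.diagonal_apply_ne _ h]

end KeyLemma


/-- **Global minimizers of the regularized factorized denoising loss.** Let `A` be real
symmetric `d × d`, `l > 0`, `m ≤ d`, and suppose the eigenvalues `mu` of `C = A - l•I`
(given by a spectral decomposition `C = U * diagonal mu * Uᵀ` with `U` orthogonal and `mu`
nonincreasing) are pairwise distinct and nonzero. Set `B = C⁺₍ₘ₎`. Consider
`f W = ‖WWᵀ - A‖_F² + 2 l tr(WWᵀ)` on `ℝ^{d×m}`. Then `f` attains its global minimum,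
`W` is a global minimizer iff `WWᵀ = B`, and the minimum value is
`‖B - C‖_F² + ‖A‖_F² - ‖C‖_F²`. -/
theorem global_minimizers_regularized_factorized_loss
    (d m : ℕ) (hm : m ≤ d) (A : Matrix (Fin d) (Fin d) ℝ) (hA : A.IsSymm)
    (l : ℝ) (hl : 0 < l)
    (C : Matrix (Fin d) (Fin d) ℝ) (hC : C = A - l • (1 : Matrix (Fin d) (Fin d) ℝ))
    (U : Matrix (Fin d) (Fin d) ℝ) (mu : Fin d → ℝ)
    (hU : Uᵀ * U = 1) (hmu : Antitone mu) (hmu' : Function.Injective mu)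
    (hmu0 : ∀ i, mu i ≠ 0)
    (hCdec : C = U * Matrix.diagonal mu * Uᵀ)
    (B : Matrix (Fin d) (Fin d) ℝ)
    (hB : B = U * Matrix.diagonal
      (fun i : Fin d => if (i : ℕ) < m then max (mu i) 0 else 0) * Uᵀ)
    (f : Matrix (Fin d) (Fin m) ℝ → ℝ)
    (hf : f = fun W => frobNorm (W * Wᵀ - A) ^ 2 + 2 * l * (W * Wᵀ).trace) :
    (∃ W : Matrix (Fin d) (Fin m) ℝ, ∀ V, f W ≤ f V) ∧
    (∀ W : Matrix (Fin d) (Fin m) ℝ, (∀ V, f W ≤ f V) ↔ W * Wᵀ = B) ∧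
    (∀ W : Matrix (Fin d) (Fin m) ℝ, (∀ V, f W ≤ f V) →
      f W = frobNorm (B - C) ^ 2 + frobNorm A ^ 2 - frobNorm C ^ 2) := by
  classical
  have hUU : U * Uᵀ = 1 := mul_eq_one_comm.mp hU
  set nu : Fin d → ℝ := fun i : Fin d => if (i : ℕ) < m then max (mu i) 0 else 0
    with hnuD
  set D : Matrix (Fin d) (Fin d) ℝ := Matrix.diagonal mu with hDdef
  have hBnu : B = U * Matrix.diagonal nu * Uᵀ := hB
  -- rewriting f
  have hfval : ∀ Wm : Matrix (Fin d) (Fin m) ℝ,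
      f Wm = F2 ((Uᵀ * Wm) * (Uᵀ * Wm)ᵀ - D) + (F2 A - F2 C) := by
    intro Wm
    have e0 : f Wm = F2 (Wm * Wmᵀ - A) + 2 * l * (Wm * Wmᵀ).trace := by
      rw [hf]; simp only; rw [frob_sq]
    have e1 : Wm * Wmᵀ - C = (Wm * Wmᵀ - A) - (-l) • (1 : Matrix (Fin d) (Fin d) ℝ) := by
      rw [hC]; ext i j
      simp only [Matrix.sub_apply, Matrix.smul_apply, smul_eq_mul, neg_mul, sub_neg_eq_add]
      ring
    have e2 : F2 (Wm * Wmᵀ - C)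
        = F2 (Wm * Wmᵀ - A) + 2*l*(Wm * Wmᵀ - A).trace + l^2 * d := by
      rw [e1, F2_sub_smul_one]; ring
    have e3 : F2 C = F2 A - 2*l*A.trace + l^2*d := by
      rw [hC, F2_sub_smul_one]
    have e4 : (Wm * Wmᵀ - A).trace = (Wm * Wmᵀ).trace - A.trace := Matrix.trace_sub _ _
    have e5 : Uᵀ * (Wm * Wmᵀ - C) * U = (Uᵀ * Wm) * (Uᵀ * Wm)ᵀ - D := by
      rw [Matrix.mul_sub, Matrix.sub_mul, hCdec]
      congr 1
      · rw [Matrix.transpose_mul, Matrix.transpose_transpose]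
        simp only [Matrix.mul_assoc]
      · simp only [← Matrix.mul_assoc]
        rw [hU, Matrix.one_mul, Matrix.mul_assoc, hU, Matrix.mul_one]
    have e6 : F2 ((Uᵀ * Wm) * (Uᵀ * Wm)ᵀ - D) = F2 (Wm * Wmᵀ - C) := by
      rw [← e5, F2_conj _ _ hUU]
    rw [e0, e6, e2, e3, e4]; ring
  -- key inequality for diagonal problem
  have key : ∀ Wm : Matrix (Fin d) (Fin m) ℝ,
      F2 (Matrix.diagonal nu - D) ≤ F2 (Wm * Wmᵀ - D) ∧
      (F2 (Wm * Wmᵀ - D) = F2 (Matrix.diagonal nu - D) → Wm * Wmᵀ = Matrix.diagonal nu) := by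
    intro Wm
    obtain ⟨P, h1, h2, h3, h4⟩ := exists_proj d m hm Wm
    exact key_diag hm mu hmu hmu' hmu0 P Wm h1 h2 h3 h4
  obtain ⟨W0, hW0⟩ := exists_W0 d m nu
    (fun i => by simp only [hnuD]; split_ifs; exacts [le_max_right _ _, le_rfl])
    (fun i h => by simp only [hnuD]; rw [if_neg h])
  have hUW0 : Uᵀ * (U * W0) = W0 := by rw [← Matrix.mul_assoc, hU, Matrix.one_mul]
  have hfW0 : f (U * W0) = F2 (Matrix.diagonal nu - D) + (F2 A - F2 C) := by
    rw [hfval, hUW0, hW0]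
  have hmin_iff : ∀ Wm : Matrix (Fin d) (Fin m) ℝ,
      (∀ V, f Wm ≤ f V) ↔ (Uᵀ * Wm) * (Uᵀ * Wm)ᵀ = Matrix.diagonal nu := by
    intro Wm
    constructor
    · intro hWm
      apply (key (Uᵀ * Wm)).2
      have h5 := hWm (U * W0)
      rw [hfval Wm, hfW0] at h5
      have h6 := (key (Uᵀ * Wm)).1
      linarith
    · intro hWm V
      rw [hfval Wm, hfval V, hWm]
      have h7 := (key (Uᵀ * V)).1
      linarith
  have hexp : ∀ Wm : Matrix (Fin d) (Fin m) ℝ,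
      (Uᵀ * Wm) * (Uᵀ * Wm)ᵀ = Uᵀ * (Wm * Wmᵀ) * U := by
    intro Wm
    rw [Matrix.transpose_mul, Matrix.transpose_transpose]
    simp only [Matrix.mul_assoc]
  have conj1 : ∀ X : Matrix (Fin d) (Fin d) ℝ,
      Uᵀ * X * U = Matrix.diagonal nu ↔ X = U * Matrix.diagonal nu * Uᵀ := by
    intro X
    constructor
    · intro h
      rw [← h]
      simp only [← Matrix.mul_assoc]
      rw [hUU, Matrix.one_mul, Matrix.mul_assoc, hUU, Matrix.mul_one]
    · intro h
      rw [h]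
      simp only [← Matrix.mul_assoc]
      rw [hU, Matrix.one_mul, Matrix.mul_assoc, hU, Matrix.mul_one]
  have hmin_iff2 : ∀ Wm : Matrix (Fin d) (Fin m) ℝ,
      (∀ V, f Wm ≤ f V) ↔ Wm * Wmᵀ = B := by
    intro Wm
    rw [hmin_iff Wm, hexp Wm, conj1, ← hBnu]
  have hBC : F2 (B - C) = F2 (Matrix.diagonal nu - D) := by
    have hBC1 : B - C = U * (Matrix.diagonal nu - D) * Uᵀ := by
      rw [hBnu, hCdec, Matrix.mul_sub, Matrix.sub_mul]
    have hconj2 := F2_conj Uᵀ (Matrix.diagonal nu - D)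
      (by rw [Matrix.transpose_transpose]; exact hU)
    rw [Matrix.transpose_transpose] at hconj2
    rw [hBC1, hconj2]
  refine ⟨⟨U * W0, ?_⟩, fun Wm => hmin_iff2 Wm, ?_⟩
  · intro V
    rw [hfW0, hfval V]
    have h7 := (key (Uᵀ * V)).1
    linarith
  · intro Wm hWm
    have h8 : (Uᵀ * Wm) * (Uᵀ * Wm)ᵀ = Matrix.diagonal nu := (hmin_iff Wm).mp hWm
    rw [hfval Wm, h8, frob_sq, frob_sq, frob_sq, hBC]
    ring
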